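/- For every n ≥ 3, the generalized Petersen graph GP(n,2) has no Γ-distance magic labeling for any Abelian group Γ of order 2n. -/

import Mathlib

open Finset

noncomputable def vertexWeight {V Γ : Type*} [Fintype V] [AddCommMonoid Γ]
    (G : SimpleGraph V) (ℓ : V → Γ) (x : V) : Γ := by
  classical exact ∑ y ∈ Finset.univ.filter (fun v => G.Adj x v), ℓ y

/-- `ℓ` is a distance magic labeling of `G` with magic constant `μ`. -/
def IsDistMagic {V Γ : Type*} [Fintype V] [AddCommMonoid Γ]
    (G : SimpleGraph V) (ℓ : V → Γ) (μ : Γ) : Prop :=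
  Function.Bijective ℓ ∧ ∀ x, vertexWeight G ℓ x = μ

noncomputable def degOf {V : Type*} [Fintype V] (G : SimpleGraph V) (v : V) : ℕ := by
  classical exact (Finset.univ.filter (fun u => G.Adj v u)).card

/-- The generalized Petersen graph `GP(n,k)` on vertex set `ZMod n ⊕ ZMod n`:
`Sum.inl i` is the outer vertex `x_i`, `Sum.inr i` the inner vertex `y_i`. -/
def GP (n k : ℕ) : SimpleGraph (ZMod n ⊕ ZMod n) :=
  SimpleGraph.fromRel (fun a b =>
    match a, b with
    | Sum.inl i, Sum.inl j => j = i + 1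
    | Sum.inr i, Sum.inr j => j = i + (k : ZMod n)
    | Sum.inl i, Sum.inr j => i = j
    | _, _ => False)

/-- A balanced zero-neighborhood labeling of a graph `G` on `2n` vertices. -/
noncomputable def IsBZN {V : Type*} [Fintype V] (G : SimpleGraph V) (n : ℕ)
    (ℓ : V → ZMod 2) : Prop := by
  classical exact
    (Finset.univ.filter (fun v => ℓ v = 0)).card = n ∧
    (Finset.univ.filter (fun v => ℓ v = 1)).card = n ∧
    ∀ v, vertexWeight G ℓ v = 0

set_option linter.unusedSectionVars false
set_option linter.unusedVariables false

section Helpers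


lemma phi_exists (Γ : Type*) [AddCommGroup Γ] [Fintype Γ] (h2 : 2 ∣ Fintype.card Γ) :
    ∃ φ : Γ →+ ZMod 2, Function.Surjective φ := by
  classical
  obtain ⟨ι, fι, p, hp, e, ⟨F⟩⟩ := AddCommGroup.equiv_directSum_zmod_of_finite Γ
  haveI : ∀ i, NeZero (p i ^ e i) := fun i => ⟨pow_ne_zero _ (hp i).ne_zero⟩
  have hcard : Fintype.card Γ = ∏ i, Fintype.card (ZMod (p i ^ e i)) := by
    rw [← Fintype.card_pi]
    exact Fintype.card_congr (F.toEquiv.trans DFinsupp.equivFunOnFintype)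
  have hex : ∃ i : ι, 2 ∣ Fintype.card (ZMod (p i ^ e i)) := by
    rw [hcard] at h2
    obtain ⟨i, _, hi⟩ := ((Nat.prime_iff.mp Nat.prime_two).dvd_finset_prod_iff
      (S := Finset.univ) (fun i => Fintype.card (ZMod (p i ^ e i)))).mp h2
    exact ⟨i, hi⟩
  obtain ⟨i, hi⟩ := hex
  rw [ZMod.card] at hi
  refine ⟨((ZMod.castHom hi (ZMod 2)).toAddMonoidHom.comp
    ((DFinsupp.evalAddMonoidHom i).comp F.toAddMonoidHom)), ?_⟩
  intro y
  refine ⟨F.symm (DFinsupp.single i (y.val : ZMod (p i ^ e i))), ?_⟩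
  show (ZMod.castHom hi (ZMod 2))
    ((F (F.symm (DFinsupp.single i (y.val : ZMod (p i ^ e i))))) i) = y
  rw [F.apply_symm_apply, DFinsupp.single_eq_same, map_natCast]
  exact ZMod.natCast_rightInverse y

section


variable {n : ℕ} [NeZero n]

lemma two_ne {n : ℕ} (hn : 3 ≤ n) : (2 : ZMod n) ≠ 0 := by
  have : ((2:ℕ) : ZMod n) ≠ 0 := by
    rw [Ne, ZMod.natCast_eq_zero_iff]
    intro h
    have := Nat.le_of_dvd (by norm_num) h
    omega
  simpa using this

lemma one_ne_of_two_ne (h2 : (2 : ZMod n) ≠ 0) : (1 : ZMod n) ≠ 0 := by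
  intro h1
  apply h2
  rw [show (2 : ZMod n) = 1 + 1 by norm_num, h1, add_zero]

lemma gp_adj_outer (h2 : (2:ZMod n) ≠ 0) (i : ZMod n) (v : ZMod n ⊕ ZMod n) :
    (GP n 2).Adj (Sum.inl i) v ↔
      v = Sum.inl (i+1) ∨ v = Sum.inl (i-1) ∨ v = Sum.inr i := by
  have h1 := one_ne_of_two_ne h2
  cases v with
  | inl j =>
      simp only [GP, SimpleGraph.fromRel_adj, Sum.inl.injEq, ne_eq, Sum.inl.injEq]
      constructor
      · rintro ⟨hne, h | h⟩
        · exact Or.inl h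
        · refine Or.inr (Or.inl ?_); rw [h]; ring
      · rintro (h | h | h)
        · exact ⟨by rw [h]; intro hh; apply h1; linear_combination -hh, Or.inl h⟩
        · exact ⟨by rw [h]; intro hh; apply h1; linear_combination hh,
            Or.inr (by rw [h]; ring)⟩
        · exact absurd h (by simp)
  | inr j =>
      simp only [GP, SimpleGraph.fromRel_adj, Sum.inr.injEq]
      constructor
      · rintro ⟨hne, h | h⟩
        · exact Or.inr (Or.inr (by rw [h]))
        · exact absurd h (by simp)
      · rintro (h | h | h)
        · exact absurd h (by simp)
        · exact absurd h (by simp)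
        · subst h
          exact ⟨by simp, Or.inl rfl⟩

lemma gp_adj_inner (h2 : (2:ZMod n) ≠ 0) (i : ZMod n) (v : ZMod n ⊕ ZMod n) :
    (GP n 2).Adj (Sum.inr i) v ↔
      v = Sum.inr (i+2) ∨ v = Sum.inr (i-2) ∨ v = Sum.inl i := by
  cases v with
  | inr j =>
      simp only [GP, SimpleGraph.fromRel_adj, Sum.inr.injEq, ne_eq, Nat.cast_ofNat]
      constructor
      · rintro ⟨hne, h | h⟩
        · exact Or.inl h
        · refine Or.inr (Or.inl ?_); rw [h]; ring
      · rintro (h | h | h)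
        · exact ⟨by rw [h]; intro hh; apply h2; linear_combination -hh, Or.inl h⟩
        · exact ⟨by rw [h]; intro hh; apply h2; linear_combination hh,
            Or.inr (by rw [h]; ring)⟩
        · exact absurd h (by simp)
  | inl j =>
      simp only [GP, SimpleGraph.fromRel_adj, Sum.inl.injEq]
      constructor
      · rintro ⟨hne, h | h⟩
        · exact absurd h (by simp)
        · exact Or.inr (Or.inr (by rw [h]))
      · rintro (h | h | h)
        · exact absurd h (by simp)
        · exact absurd h (by simp)
        · subst h
          exact ⟨by simp, Or.inr rfl⟩

variable {Γ : Type*} [AddCommMonoid Γ]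

lemma weight_outer (h2 : (2:ZMod n) ≠ 0) (ℓ : ZMod n ⊕ ZMod n → Γ) (i : ZMod n) :
    vertexWeight (GP n 2) ℓ (Sum.inl i)
      = ℓ (Sum.inl (i+1)) + ℓ (Sum.inl (i-1)) + ℓ (Sum.inr i) := by
  classical
  have hfil : Finset.univ.filter (fun v => (GP n 2).Adj (Sum.inl i) v)
      = insert (Sum.inl (i+1)) (insert (Sum.inl (i-1)) {Sum.inr i}) := by
    ext v
    simp [gp_adj_outer h2 i v]
  rw [vertexWeight, hfil, Finset.sum_insert, Finset.sum_insert, Finset.sum_singleton, add_assoc]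
  · simp
  · simp only [mem_insert, mem_singleton]
    rintro (h | h)
    · have : i + 1 = i - 1 := Sum.inl.injEq .. ▸ h
      apply h2; linear_combination this
    · exact absurd h (by simp)

lemma weight_inner (h2 : (2:ZMod n) ≠ 0) (h4 : (4:ZMod n) ≠ 0) (ℓ : ZMod n ⊕ ZMod n → Γ)
    (i : ZMod n) :
    vertexWeight (GP n 2) ℓ (Sum.inr i)
      = ℓ (Sum.inr (i+2)) + ℓ (Sum.inr (i-2)) + ℓ (Sum.inl i) := by
  classical
  have hfil : Finset.univ.filter (fun v => (GP n 2).Adj (Sum.inr i) v)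
      = insert (Sum.inr (i+2)) (insert (Sum.inr (i-2)) {Sum.inl i}) := by
    ext v
    simp [gp_adj_inner h2 i v]
  rw [vertexWeight, hfil, Finset.sum_insert, Finset.sum_insert, Finset.sum_singleton, add_assoc]
  · simp
  · simp only [mem_insert, mem_singleton]
    rintro (h | h)
    · have : i + 2 = i - 2 := Sum.inr.injEq .. ▸ h
      apply h4; linear_combination this
    · exact absurd h (by simp)

lemma weight_inner_four (hn : n = 4) (ℓ : ZMod n ⊕ ZMod n → Γ) (i : ZMod n) :
    vertexWeight (GP n 2) ℓ (Sum.inr i) = ℓ (Sum.inr (i+2)) + ℓ (Sum.inl i) := by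
  classical
  subst hn
  have h2 : (2 : ZMod 4) ≠ 0 := by decide
  have hfil : Finset.univ.filter (fun v => (GP 4 2).Adj (Sum.inr i) v)
      = insert (Sum.inr (i+2)) {Sum.inl i} := by
    have h42 : (i - 2 : ZMod 4) = i + 2 := by
      have h40 : (4 : ZMod 4) = 0 := by decide
      linear_combination -h40
    ext v
    simp only [mem_filter, mem_univ, true_and, gp_adj_inner h2 i v, mem_insert,
      mem_singleton, h42]
    tauto
  rw [vertexWeight, hfil, Finset.sum_insert, Finset.sum_singleton]
  simp


end

section Core2

variable {n : ℕ} [NeZero n]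


variable {n : ℕ} [NeZero n]

-- generic block-sum lemma
lemma sum_block {M : Type*} [AddCommMonoid M] (F : ℕ → M) (p : ℕ)
    (hF : ∀ x, F (x + p) = F x) (e : ℕ) :
    ∑ m ∈ range (e * p), F m = e • ∑ r ∈ range p, F r := by
  have hFk : ∀ (k : ℕ) (x : ℕ), F (x + k * p) = F x := by
    intro k
    induction k with
    | zero => simp
    | succ k ih =>
        intro x
        have : x + (k+1) * p = (x + k * p) + p := by ring
        rw [this, hF, ih]
  induction e with
  | zero => simp
  | succ e ih =>
      rw [Nat.succ_mul, Finset.sum_range_add, ih, succ_nsmul]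
      congr 1
      refine Finset.sum_congr rfl fun r _ => ?_
      rw [show e * p + r = r + e * p by ring, hFk]

-- shift lemma
lemma sum_shift (d : ℕ) (g : ZMod n → ZMod 2) (hg : ∀ x, g (x + (d : ZMod n)) = g x) :
    ∑ r ∈ range d, g ((r : ZMod n) + 1) = ∑ r ∈ range d, g (r : ZMod n) := by
  have key : ∑ r ∈ range d, g (((r+1 : ℕ) : ZMod n)) = ∑ r ∈ range d, g (r : ZMod n) := by
    have h1 : ∑ i ∈ range (d+1), g (i : ZMod n)
        = (∑ i ∈ range d, g ((i+1 : ℕ) : ZMod n)) + g ((0:ℕ) : ZMod n) :=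
      Finset.sum_range_succ' (fun i => g (i : ZMod n)) d
    have h2 : ∑ i ∈ range (d+1), g (i : ZMod n)
        = (∑ i ∈ range d, g (i : ZMod n)) + g ((d:ℕ) : ZMod n) :=
      Finset.sum_range_succ (fun i => g (i : ZMod n)) d
    have h3 : g ((d:ℕ) : ZMod n) = g ((0:ℕ) : ZMod n) := by
      have := hg 0
      rw [zero_add] at this
      simpa using this
    rw [h3] at h2
    exact add_right_cancel (h1.symm.trans h2)
  rw [← key]
  refine Finset.sum_congr rfl fun r _ => ?_
  congr 1
  push_cast
  ring

lemma core (hn : 3 ≤ n) (a b : ZMod n → ZMod 2) (c : ZMod 2)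
    (eq1 : ∀ i, a (i+2) + a i + b (i+1) = c)
    (eq2 : ∀ i, b (i+4) + b i + a (i+2) = c)
    (htot : (∑ i : ZMod n, (if a i = 1 then 1 else 0 : ℕ))
          + (∑ i : ZMod n, (if b i = 1 then 1 else 0 : ℕ)) = n) : False := by
  classical
  set d := Nat.gcd 15 n with hd
  have hd15 : d ∣ 15 := Nat.gcd_dvd_left 15 n
  have hdn : d ∣ n := Nat.gcd_dvd_right 15 n
  have hdpos : 0 < d := Nat.gcd_pos_of_pos_left n (by norm_num)
  -- basic derived equations
  have hb : ∀ i, b (i+1) = c + a i + a (i+2) := by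
    intro i
    have h := eq1 i
    have helper : ∀ x y z c : ZMod 2, x + y + z = c → z = c + y + x := by decide
    exact helper _ _ _ _ h
  have E : ∀ i, a i + a (i+2) + a (i+3) + a (i+4) + a (i+6) = c := by
    intro i
    have h1 := hb i
    have h2 := hb (i+4)
    rw [show i+4+1 = i+5 by ring, show i+4+2 = i+6 by ring] at h2
    have h3 := eq2 (i+1)
    rw [show i+1+4 = i+5 by ring, show i+1+2 = i+3 by ring] at h3
    have helper : ∀ c b1 b5 a0 a2 a3 a4 a6 : ZMod 2,
        b1 = c + a0 + a2 → b5 = c + a4 + a6 → b5 + b1 + a3 = c →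
        a0 + a2 + a3 + a4 + a6 = c := by decide
    exact helper c _ _ _ _ _ _ _ h1 h2 h3
  set s : ZMod n → ZMod 2 := fun j => a j + a (j+1) + a (j+2) with hs
  have hs5 : ∀ i, s (i+5) = s i := by
    intro i
    have h1 := E i
    have h2 := E (i+1)
    rw [show i+1+2 = i+3 by ring, show i+1+3 = i+4 by ring, show i+1+4 = i+5 by ring,
      show i+1+6 = i+7 by ring] at h2
    have helper : ∀ c a0 a1 a2 a3 a4 a5 a6 a7 : ZMod 2,
        a0+a2+a3+a4+a6 = c → a1+a3+a4+a5+a7 = c → a5+a6+a7 = a0+a1+a2 := by decide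
    have goal := helper c (a i) (a (i+1)) (a (i+2)) (a (i+3)) (a (i+4)) (a (i+5)) (a (i+6))
      (a (i+7)) h1 h2
    simp only [hs]
    rw [show i+5+1 = i+6 by ring, show i+5+2 = i+7 by ring]
    exact goal
  have window : ∀ i, s i + s (i+1) + s (i+2) + s (i+3) + s (i+4) = c := by
    intro i
    have h1 := E i
    have helper : ∀ c a0 a1 a2 a3 a4 a5 a6 : ZMod 2,
        a0+a2+a3+a4+a6 = c →
        (a0+a1+a2)+(a1+a2+a3)+(a2+a3+a4)+(a3+a4+a5)+(a4+a5+a6) = c := by decide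
    have goal := helper c (a i) (a (i+1)) (a (i+2)) (a (i+3)) (a (i+4)) (a (i+5)) (a (i+6)) h1
    simp only [hs]
    rw [show i+1+1 = i+2 by ring, show i+1+2 = i+3 by ring, show i+2+1 = i+3 by ring,
      show i+2+2 = i+4 by ring, show i+3+1 = i+4 by ring, show i+3+2 = i+5 by ring,
      show i+4+1 = i+5 by ring, show i+4+2 = i+6 by ring]
    exact goal
  have h3step : ∀ j, a (j+3) = a j + s j + s (j+1) := by
    intro j
    simp only [hs]
    rw [show j+1+1 = j+2 by ring, show j+1+2 = j+3 by ring]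
    have helper : ∀ a0 a1 a2 a3 : ZMod 2, a3 = a0 + (a0+a1+a2) + (a1+a2+a3) := by decide
    exact helper (a j) (a (j+1)) (a (j+2)) (a (j+3))
  have per15 : ∀ i, a (i+15) = a i := by
    intro i
    have c2 : a (i+6) = a (i+3) + s (i+3) + s (i+4) := by
      have := h3step (i+3)
      rwa [show i+3+3 = i+6 by ring, show i+3+1 = i+4 by ring] at this
    have c3 : a (i+9) = a (i+6) + s (i+6) + s (i+7) := by
      have := h3step (i+6)
      rwa [show i+6+3 = i+9 by ring, show i+6+1 = i+7 by ring] at this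
    have c4 : a (i+12) = a (i+9) + s (i+9) + s (i+10) := by
      have := h3step (i+9)
      rwa [show i+9+3 = i+12 by ring, show i+9+1 = i+10 by ring] at this
    have c5 : a (i+15) = a (i+12) + s (i+12) + s (i+13) := by
      have := h3step (i+12)
      rwa [show i+12+3 = i+15 by ring, show i+12+1 = i+13 by ring] at this
    have r6 : s (i+6) = s (i+1) := by
      have := hs5 (i+1); rwa [show i+1+5 = i+6 by ring] at this
    have r7 : s (i+7) = s (i+2) := by
      have := hs5 (i+2); rwa [show i+2+5 = i+7 by ring] at this
    have r9 : s (i+9) = s (i+4) := by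
      have := hs5 (i+4); rwa [show i+4+5 = i+9 by ring] at this
    have r10 : s (i+10) = s i := by
      have h1 := hs5 (i+5); rw [show i+5+5 = i+10 by ring] at h1
      rw [h1, hs5 i]
    have r12 : s (i+12) = s (i+2) := by
      have h1 := hs5 (i+7); rw [show i+7+5 = i+12 by ring] at h1
      rw [h1, r7]
    have r13 : s (i+13) = s (i+3) := by
      have h1 := hs5 (i+8); rw [show i+8+5 = i+13 by ring] at h1
      have h2 := hs5 (i+3); rw [show i+3+5 = i+8 by ring] at h2
      rw [h1, h2]
    rw [c5, c4, c3, c2, h3step i, r6, r7, r9, r10, r12, r13]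
    have helper : ∀ x s0 s1 s2 s3 s4 : ZMod 2,
        x + s0 + s1 + s3 + s4 + s1 + s2 + s4 + s0 + s2 + s3 = x := by decide
    exact helper (a i) (s i) (s (i+1)) (s (i+2)) (s (i+3)) (s (i+4))
  -- integer periodicity
  have perInt : ∀ (z : ℤ) (i : ZMod n), a (i + 15 * (z : ZMod n)) = a i := by
    intro z
    induction z using Int.induction_on with
    | zero => intro i; norm_num
    | succ k ih =>
        intro i
        have h1 := per15 (i + 15 * ((k : ℤ) : ZMod n))
        have h2 := ih i
        rw [show i + 15 * (((k:ℤ)+1 : ℤ) : ZMod n) = i + 15 * ((k:ℤ) : ZMod n) + 15 by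
          push_cast; ring]
        rw [h1, h2]
    | pred k ih =>
        intro i
        have h1 := per15 (i + 15 * ((-(k:ℤ)-1 : ℤ) : ZMod n))
        rw [show i + 15 * ((-(k:ℤ)-1 : ℤ) : ZMod n) + 15
            = i + 15 * ((-(k:ℤ) : ℤ) : ZMod n) by push_cast; ring] at h1
        exact h1.symm.trans (ih i)
  -- d-periodicity of a
  have hperd : ∀ i : ZMod n, a (i + (d : ZMod n)) = a i := by
    have hbez := Nat.gcd_eq_gcd_ab 15 n
    have hcast : ((d : ℕ) : ZMod n) = 15 * ((Nat.gcdA 15 n : ℤ) : ZMod n) := by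
      have h0 := congrArg (fun z : ℤ => ((z : ZMod n))) hbez
      push_cast at h0
      rw [ZMod.natCast_self, zero_mul, add_zero] at h0
      rw [hd]
      exact h0
    intro i
    rw [hcast]
    exact perInt (Nat.gcdA 15 n) i
  have hperdb : ∀ i : ZMod n, b (i + (d : ZMod n)) = b i := by
    intro i
    have e1 := hb (i - 1)
    rw [show i-1+1 = i by ring, show i-1+2 = i+1 by ring] at e1
    have e2 := hb (i + (d:ZMod n) - 1)
    rw [show i+(d:ZMod n)-1+1 = i+(d:ZMod n) by ring,
      show i+(d:ZMod n)-1+2 = i+1+(d:ZMod n) by ring,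
      show i+(d:ZMod n)-1 = i-1+(d:ZMod n) by ring] at e2
    rw [e1, e2, hperd (i-1), hperd (i+1)]
  have hperds : ∀ i : ZMod n, s (i + (d : ZMod n)) = s i := by
    intro i
    simp only [hs]
    rw [show i+(d:ZMod n)+1 = (i+1)+(d:ZMod n) by ring,
      show i+(d:ZMod n)+2 = (i+2)+(d:ZMod n) by ring, hperd, hperd, hperd]
  -- ZMod-sum to range-sum
  have zsum : ∀ (M : Type) (instM : AddCommMonoid M) (f : ZMod n → M),
      ∑ i : ZMod n, f i = ∑ m ∈ range n, f (m : ZMod n) := by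
    intro M instM f
    rw [← Fin.sum_univ_eq_sum_range (fun m => f (m : ZMod n)) n]
    have hbij : Function.Bijective (fun m : Fin n => ((m : ℕ) : ZMod n)) := by
      rw [Fintype.bijective_iff_surjective_and_card]
      constructor
      · intro i
        exact ⟨⟨i.val, ZMod.val_lt i⟩, ZMod.natCast_rightInverse i⟩
      · rw [ZMod.card, Fintype.card_fin]
    exact (Fintype.sum_bijective _ hbij (fun m : Fin n => f ((m : ℕ) : ZMod n)) f
      (fun m => rfl)).symm
  -- count sums
  set α := ∑ r ∈ range d, (if a (r : ZMod n) = 1 then 1 else 0 : ℕ) with hα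
  set β := ∑ r ∈ range d, (if b (r : ZMod n) = 1 then 1 else 0 : ℕ) with hβ
  have hper_inda : ∀ x : ℕ, (if a ((x + d : ℕ) : ZMod n) = 1 then 1 else 0 : ℕ)
      = (if a ((x : ℕ) : ZMod n) = 1 then 1 else 0 : ℕ) := by
    intro x
    have : ((x + d : ℕ) : ZMod n) = (x : ZMod n) + (d : ZMod n) := by push_cast; ring
    rw [this, hperd]
  have hper_indb : ∀ x : ℕ, (if b ((x + d : ℕ) : ZMod n) = 1 then 1 else 0 : ℕ)
      = (if b ((x : ℕ) : ZMod n) = 1 then 1 else 0 : ℕ) := by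
    intro x
    have : ((x + d : ℕ) : ZMod n) = (x : ZMod n) + (d : ZMod n) := by push_cast; ring
    rw [this, hperdb]
  have hcount : (n / d) * (α + β) = n := by
    have ha' : ∑ i : ZMod n, (if a i = 1 then 1 else 0 : ℕ) = (n/d) * α := by
      rw [zsum ℕ _ (fun i => if a i = 1 then 1 else 0),
        show range n = range ((n/d) * d) from congrArg range (Nat.div_mul_cancel hdn).symm,
        sum_block _ d hper_inda (n/d), smul_eq_mul]
    have hb' : ∑ i : ZMod n, (if b i = 1 then 1 else 0 : ℕ) = (n/d) * β := by
      rw [zsum ℕ _ (fun i => if b i = 1 then 1 else 0),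
        show range n = range ((n/d) * d) from congrArg range (Nat.div_mul_cancel hdn).symm,
        sum_block _ d hper_indb (n/d), smul_eq_mul]
    rw [ha', hb', ← Nat.mul_add] at htot
    exact htot
  have hαβ : α + β = d := by
    have h1 : (n / d) * (α + β) = (n / d) * d := by
      rw [hcount, Nat.div_mul_cancel hdn]
    have hpos : 0 < n / d := Nat.div_pos (Nat.le_of_dvd (Nat.pos_of_ne_zero (NeZero.ne n)) hdn) hdpos
    exact Nat.eq_of_mul_eq_mul_left hpos h1
  -- cast to ZMod 2
  have cast_ind : ∀ x : ZMod 2, (((if x = 1 then 1 else 0 : ℕ) : ZMod 2)) = x := by decide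
  set A := ∑ r ∈ range d, a (r : ZMod n) with hA
  set B := ∑ r ∈ range d, b (r : ZMod n) with hB
  have hcastA : ((α : ℕ) : ZMod 2) = A := by
    rw [hα, Nat.cast_sum, hA]
    exact Finset.sum_congr rfl fun r _ => cast_ind _
  have hcastB : ((β : ℕ) : ZMod 2) = B := by
    rw [hβ, Nat.cast_sum, hB]
    exact Finset.sum_congr rfl fun r _ => cast_ind _
  have hdodd : (d : ZMod 2) = 1 := by
    have h2d : ¬ (2 ∣ d) := by
      intro h
      have := h.trans hd15
      norm_num at this
    have hd21 : d = 2*(d/2) + 1 := by omega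
    calc (d : ZMod 2) = ((2*(d/2) + 1 : ℕ) : ZMod 2) := by rw [← hd21]
      _ = 2 * ((d/2 : ℕ) : ZMod 2) + 1 := by push_cast; ring
      _ = 1 := by rw [show (2 : ZMod 2) = 0 by decide]; ring
  have hAB1 : A + B = 1 := by
    have := congrArg (fun m : ℕ => (m : ZMod 2)) hαβ
    simp only [Nat.cast_add] at this
    rw [hcastA, hcastB] at this
    rw [this, hdodd]
  -- B = c
  have hBshift : ∑ r ∈ range d, b ((r : ZMod n) + 1) = B := sum_shift d b hperdb
  have hA1 : ∑ r ∈ range d, a ((r : ZMod n) + 1) = A := sum_shift d a hperd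
  have hA2 : ∑ r ∈ range d, a ((r : ZMod n) + 2) = A := by
    have h1 := sum_shift d (fun x => a (x + 1)) (fun x => by
      rw [show x + (d : ZMod n) + 1 = (x + 1) + (d:ZMod n) by ring, hperd])
    calc ∑ r ∈ range d, a ((r : ZMod n) + 2)
        = ∑ r ∈ range d, a ((r : ZMod n) + 1 + 1) := by
          refine Finset.sum_congr rfl fun r _ => ?_
          rw [show (r : ZMod n) + 2 = (r:ZMod n) + 1 + 1 by ring]
      _ = ∑ r ∈ range d, a ((r : ZMod n) + 1) := h1
      _ = A := hA1
  have hsmul : ∀ x : ZMod 2, d • x = x := by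
    intro x
    rw [nsmul_eq_mul, hdodd, one_mul]
  have hBc : B = c := by
    have h1 : ∑ r ∈ range d, b ((r : ZMod n) + 1)
        = ∑ r ∈ range d, (c + a (r : ZMod n) + a ((r : ZMod n) + 2)) :=
      Finset.sum_congr rfl fun r _ => hb _
    rw [hBshift] at h1
    rw [h1, Finset.sum_add_distrib, Finset.sum_add_distrib, Finset.sum_const, card_range,
      hA2, hsmul, ← hA]
    have helper : ∀ x y : ZMod 2, x + y + y = x := by decide
    exact helper c A
  -- A = c via double counting of ∑_{m < 5d} s m
  have hper_s : ∀ x : ℕ, s (((x + 5 : ℕ) : ZMod n)) = s ((x : ℕ) : ZMod n) := by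
    intro x
    have : ((x + 5 : ℕ) : ZMod n) = ((x : ℕ) : ZMod n) + 5 := by push_cast; ring
    rw [this, hs5]
  have hper_s_d : ∀ x : ℕ, s (((x + d : ℕ) : ZMod n)) = s ((x : ℕ) : ZMod n) := by
    intro x
    have : ((x + d : ℕ) : ZMod n) = ((x : ℕ) : ZMod n) + (d : ZMod n) := by push_cast; ring
    rw [this, hperds]
  have hS5a : ∑ m ∈ range (d * 5), s ((m : ℕ) : ZMod n) = c := by
    rw [sum_block (fun m => s ((m : ℕ) : ZMod n)) 5 hper_s d]
    have w := window 0
    rw [zero_add, zero_add, zero_add, zero_add] at w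
    have hwin : ∑ r ∈ range 5, s ((r : ℕ) : ZMod n) = c := by
      rw [Finset.sum_range_succ, Finset.sum_range_succ, Finset.sum_range_succ,
        Finset.sum_range_succ, Finset.sum_range_one]
      push_cast
      exact w
    rw [hwin, hsmul]
  have hS5b : ∑ m ∈ range (d * 5), s ((m : ℕ) : ZMod n) = A := by
    rw [show d * 5 = 5 * d by ring, sum_block (fun m => s ((m : ℕ) : ZMod n)) d hper_s_d 5]
    have hsum : ∑ r ∈ range d, s ((r : ℕ) : ZMod n) = A := by
      have expand : ∑ r ∈ range d, s ((r : ℕ) : ZMod n)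
          = (∑ r ∈ range d, a ((r : ℕ) : ZMod n)) + (∑ r ∈ range d, a (((r : ℕ) : ZMod n) + 1))
            + (∑ r ∈ range d, a (((r : ℕ) : ZMod n) + 2)) := by
        rw [← Finset.sum_add_distrib, ← Finset.sum_add_distrib]
      rw [expand, ← hA, hA1, hA2]
      have helper : ∀ x : ZMod 2, x + x + x = x := by decide
      exact helper A
    rw [hsum]
    have h5 : (5 : ℕ) • A = A := by
      rw [nsmul_eq_mul]
      rw [show ((5:ℕ) : ZMod 2) = 1 by decide, one_mul]
    exact h5
  have hAc : A = c := hS5b.symm.trans hS5a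
  rw [hAc, hBc] at hAB1
  have : ∀ x : ZMod 2, x + x ≠ 1 := by decide
  exact this c hAB1



end Core2
end Helpers


lemma count_one {Γ : Type*} [AddCommGroup Γ] [Fintype Γ] (φ : Γ →+ ZMod 2)
    (hφ : Function.Surjective φ) (n : ℕ) (hcard : Fintype.card Γ = 2 * n) :
    ∑ g : Γ, (if φ g = 1 then 1 else 0 : ℕ) = n := by
  classical
  obtain ⟨g1, hg1⟩ := hφ 1
  have hswap : ∑ g : Γ, (if φ g = 1 then 1 else 0 : ℕ)
      = ∑ g : Γ, (if φ g = 0 then 1 else 0 : ℕ) := by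
    calc ∑ g : Γ, (if φ g = 1 then 1 else 0 : ℕ)
        = ∑ g : Γ, (if φ ((Equiv.addRight g1) g) = 0 then 1 else 0 : ℕ) := by
          refine Finset.sum_congr rfl fun g _ => ?_
          simp only [Equiv.coe_addRight, map_add, hg1]
          have : ∀ x : ZMod 2, (if x = 1 then 1 else 0 : ℕ) = (if x + 1 = 0 then 1 else 0) := by
            decide
          exact this (φ g)
      _ = ∑ g : Γ, (if φ g = 0 then 1 else 0 : ℕ) :=
          Equiv.sum_comp (Equiv.addRight g1) (fun g => if φ g = 0 then 1 else 0 : Γ → ℕ)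
  have htot2 : (∑ g : Γ, (if φ g = 0 then 1 else 0 : ℕ))
      + (∑ g : Γ, (if φ g = 1 then 1 else 0 : ℕ)) = 2 * n := by
    rw [← Finset.sum_add_distrib]
    have hpt : ∀ x : ZMod 2, ((if x = 0 then 1 else 0) + (if x = 1 then 1 else 0) : ℕ) = 1 := by
      decide
    calc ∑ g : Γ, ((if φ g = 0 then 1 else 0) + (if φ g = 1 then 1 else 0) : ℕ)
        = ∑ _g : Γ, (1:ℕ) := Finset.sum_congr rfl fun g _ => hpt (φ g)
      _ = Fintype.card Γ := by rw [Finset.sum_const, Finset.card_univ, smul_eq_mul, mul_one]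
      _ = 2 * n := hcard
  omega

theorem stmt16 {Γ : Type*} [AddCommGroup Γ] [Fintype Γ]
    (n : ℕ) [NeZero n] (hn : 3 ≤ n) (hcard : Fintype.card Γ = 2 * n) :
    ¬ ∃ (ℓ : ZMod n ⊕ ZMod n → Γ) (μ : Γ), IsDistMagic (GP n 2) ℓ μ := by
  rintro ⟨ℓ, μ, hbij, hmag⟩
  have h2 : (2 : ZMod n) ≠ 0 := two_ne hn
  by_cases hn4 : n = 4
  · -- special case n = 4
    subst hn4
    have h2' : (2 : ZMod 4) ≠ 0 := by decide
    have wouter : ∀ i : ZMod 4, ℓ (Sum.inl (i+1)) + ℓ (Sum.inl (i-1)) + ℓ (Sum.inr i) = μ := by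
      intro i
      have := hmag (Sum.inl i)
      rwa [weight_outer h2' ℓ i] at this
    have winner : ∀ i : ZMod 4, ℓ (Sum.inr (i+2)) + ℓ (Sum.inl i) = μ := by
      intro i
      have := hmag (Sum.inr i)
      rwa [weight_inner_four rfl ℓ i] at this
    have key : ∀ i : ZMod 4, ℓ (Sum.inl (i+1)) + ℓ (Sum.inl (i-1)) = ℓ (Sum.inl (i+2)) := by
      intro i
      have h1 := wouter i
      have hw := winner (i+2)
      rw [add_assoc, show (2:ZMod 4)+2 = 0 by decide, add_zero] at hw
      rw [add_comm (ℓ (Sum.inr i)) (ℓ (Sum.inl (i+2)))] at hw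
      have h3 := h1.trans hw.symm
      exact add_right_cancel h3
    have k1 := key 1
    rw [show (1:ZMod 4)+1 = 2 by decide, show (1:ZMod 4)-1 = 0 by decide,
      show (1:ZMod 4)+2 = 3 by decide] at k1
    have k3 := key 3
    rw [show (3:ZMod 4)+1 = 0 by decide, show (3:ZMod 4)-1 = 2 by decide,
      show (3:ZMod 4)+2 = 1 by decide] at k3
    have heq : ℓ (Sum.inl (3 : ZMod 4)) = ℓ (Sum.inl (1 : ZMod 4)) := by
      rw [← k1, ← k3, add_comm]
    have := hbij.1 heq
    simp only [Sum.inl.injEq] at this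
    exact absurd this (by decide)
  · have h4 : (4 : ZMod n) ≠ 0 := by
      intro h
      have h4' : ((4:ℕ) : ZMod n) = 0 := by exact_mod_cast h
      rw [ZMod.natCast_eq_zero_iff] at h4'
      have := Nat.le_of_dvd (by norm_num) h4'
      interval_cases n
      · norm_num at h4'
      · exact hn4 rfl
    obtain ⟨φ, hφ⟩ := phi_exists Γ ⟨n, hcard⟩
    set a := fun i : ZMod n => φ (ℓ (Sum.inl i)) with ha
    set b := fun i : ZMod n => φ (ℓ (Sum.inr i)) with hbdef
    have eq1 : ∀ i : ZMod n, a (i+2) + a i + b (i+1) = φ μ := by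
      intro i
      have h := hmag (Sum.inl (i+1))
      rw [weight_outer h2 ℓ (i+1), show i+1+1 = i+2 by ring, show i+1-1 = i by ring] at h
      have := congrArg φ h
      simpa only [map_add, ha, hbdef] using this
    have eq2 : ∀ i : ZMod n, b (i+4) + b i + a (i+2) = φ μ := by
      intro i
      have h := hmag (Sum.inr (i+2))
      rw [weight_inner h2 h4 ℓ (i+2), show i+2+2 = i+4 by ring, show i+2-2 = i by ring] at h
      have := congrArg φ h
      simpa only [map_add, ha, hbdef] using this
    have htot : (∑ i : ZMod n, (if a i = 1 then 1 else 0 : ℕ))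
        + (∑ i : ZMod n, (if b i = 1 then 1 else 0 : ℕ)) = n := by
      have hsum : ∑ v : ZMod n ⊕ ZMod n, (if φ (ℓ v) = 1 then 1 else 0 : ℕ) = n := by
        rw [Function.Bijective.sum_comp hbij (fun g => if φ g = 1 then 1 else 0 : Γ → ℕ)]
        exact count_one φ hφ n hcard
      rw [Fintype.sum_sum_type] at hsum
      exact hsum
    exact core hn a b (φ μ) eq1 eq2 htot
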